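/- Let n ≥ 1 and let w_0, …, w_n be unit vectors in C^n forming the vertex set of a real regular simplex. Then for every index choice 0 ≤ j_1 < … < j_n ≤ n, one has |det(w_{j_1}, …, w_{j_n})| = sqrt((n+1)^(n-1) / n^n); in particular the minimum of these absolute determinants equals sqrt((n+1)^(n-1) / n^n). -/

import Mathlib

/-- If `w₀, …, wₙ` are unit vectors in `ℂⁿ` forming the vertex set of a real regular
simplex (all coordinates real, the vectors distinct, all pairwise distances equal),
then every `n × n` determinant of `n` of the vectors has absolute value
`√((n+1)^(n-1) / nⁿ)`. -/
theorem stmt1 (n : ℕ) (hn : 1 ≤ n) (w : Fin (n + 1) → EuclideanSpace ℂ (Fin n))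
    (hw : ∀ j, ‖w j‖ = 1)
    (hreal : ∀ j i, (w j i).im = 0)
    (hinj : Function.Injective w)
    (d : ℝ) (hd : ∀ j k, j ≠ k → ‖w j - w k‖ = d) :
    ∀ s : Fin n → Fin (n + 1), StrictMono s →
      ‖Matrix.det (Matrix.of fun i a => w (s a) i)‖ =
        Real.sqrt (((n : ℝ) + 1) ^ (n - 1) / (n : ℝ) ^ n) := by
  have hnR : (n:ℝ) ≠ 0 := Nat.cast_ne_zero.2 (by omega)
  have hnC : (n:ℂ) ≠ 0 := Nat.cast_ne_zero.2 (by omega)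
  set e : ℝ := 1 - d^2/2 with he_def
  -- imaginary parts of inner products vanish
  have him : ∀ j k, (inner ℂ (w j) (w k) : ℂ).im = 0 := by
    intro j k
    rw [PiLp.inner_apply]
    simp only [RCLike.inner_apply]
    rw [Complex.im_sum]
    refine Finset.sum_eq_zero fun i _ => ?_
    simp [Complex.mul_im, hreal]
  -- d > 0
  have h01 : (0 : Fin (n+1)) ≠ 1 := by
    refine Fin.ne_of_val_ne ?_
    simp [Fin.val_one', Nat.mod_eq_of_lt (show 1 < n+1 by omega)]
  have hdpos : 0 < d := by
    rw [← hd 0 1 h01]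
    exact norm_sub_pos_iff.mpr fun h => h01 (hinj h)
  have helt : e < 1 := by
    have : 0 < d^2 := by positivity
    simp only [he_def]; linarith
  -- inner products
  have hip : ∀ j k, (inner ℂ (w j) (w k) : ℂ) = if j = k then 1 else (e:ℂ) := by
    intro j k
    by_cases h : j = k
    · subst h
      simp [inner_self_eq_norm_sq_to_K, hw]
    · have h1 := @norm_sub_sq ℂ _ _ _ _ (w j) (w k)
      rw [hd j k h, hw, hw] at h1
      have hre : (inner ℂ (w j) (w k) : ℂ).re = e := by
        have : RCLike.re (inner ℂ (w j) (w k) : ℂ) = (inner ℂ (w j) (w k) : ℂ).re := rfl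
        rw [this] at h1
        simp only [he_def]; nlinarith
      simp only [h, if_neg]
      exact Complex.ext (by simpa using hre) (by simpa using him j k)
  -- linear dependence
  have hdep : ¬ LinearIndependent ℂ w := by
    intro h
    have := h.fintype_card_le_finrank
    rw [finrank_euclideanSpace_fin, Fintype.card_fin] at this
    omega
  obtain ⟨g, hgsum, i0, hi0⟩ := Fintype.not_linearIndependent_iff.mp hdep
  have hkey : ∀ k, g k * (1 - (e:ℂ)) + (e:ℂ) * ∑ j, g j = 0 := by
    intro k
    have h0 : (inner ℂ (w k) (∑ j, g j • w j) : ℂ) = 0 := by rw [hgsum, inner_zero_right]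
    rw [inner_sum] at h0
    simp only [inner_smul_right, hip] at h0
    have hterm : ∀ j : Fin (n+1), g j * (if k = j then (1:ℂ) else (e:ℂ))
        = (if j = k then g k * (1 - (e:ℂ)) else 0) + g j * e := by
      intro j
      by_cases h : j = k
      · subst h; simp; ring
      · simp [h, Ne.symm h]
    rw [Finset.sum_congr rfl (fun j _ => hterm j), Finset.sum_add_distrib,
      Finset.sum_ite_eq' Finset.univ k, if_pos (Finset.mem_univ k)] at h0
    rw [← h0, ← Finset.sum_mul]
    ring
  have hene : (1 : ℂ) - (e:ℂ) ≠ 0 := by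
    intro h
    have : (e : ℂ) = 1 := by linear_combination -h
    have : e = 1 := by exact_mod_cast this
    linarith
  have hgconst : ∀ k, g k = g i0 := by
    intro k
    have h1 := hkey k
    have h2 := hkey i0
    have : (g k - g i0) * (1 - (e:ℂ)) = 0 := by linear_combination h1 - h2
    rcases mul_eq_zero.mp this with h | h
    · exact sub_eq_zero.mp h
    · exact absurd h hene
  have hsumg : ∑ j, g j = ((n:ℂ)+1) * g i0 := by
    rw [Finset.sum_congr rfl (fun j _ => hgconst j), Finset.sum_const, Finset.card_univ,
      Fintype.card_fin, nsmul_eq_mul]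
    push_cast
    ring
  have heC : (e : ℂ) = -1 / (n:ℂ) := by
    have h := hkey i0
    rw [hsumg] at h
    have h2 : g i0 * (1 + (n:ℂ) * e) = 0 := by linear_combination h
    rcases mul_eq_zero.mp h2 with h | h
    · exact absurd h hi0
    · field_simp
      linear_combination h
  intro s hs
  set M : Matrix (Fin n) (Fin n) ℂ := Matrix.of fun i a => w (s a) i with hM
  have hMG : M.conjTranspose * M = Matrix.of fun a b => if a = b then (1:ℂ) else (e:ℂ) := by
    ext a b
    have h := hip (s a) (s b)
    rw [PiLp.inner_apply] at h
    simp only [RCLike.inner_apply] at h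
    simp only [Matrix.mul_apply, Matrix.conjTranspose_apply, Matrix.of_apply, hM,
      Complex.star_def]
    rw [Finset.sum_congr rfl (fun x _ => mul_comm ((starRingEnd ℂ) ((w (s a)).ofLp x)) ((w (s b)).ofLp x)), h]
    simp only [hs.injective.eq_iff]
  have hGdet : (Matrix.of fun a b : Fin n => if a = b then (1:ℂ) else (e:ℂ)).det
      = ((1:ℂ)-e)^n * (1 + n * ((e:ℂ)/(1-e))) := by
    have hm : (Matrix.of fun a b : Fin n => if a = b then (1:ℂ) else (e:ℂ))
        = ((1:ℂ)-e) • (1 + Matrix.replicateCol Unit (fun _ : Fin n => (e:ℂ)/(1-e)) * Matrix.replicateRow Unit (fun _ : Fin n => (1:ℂ))) := by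
      ext a b
      by_cases h : a = b
      · subst h
        simp [Matrix.mul_apply, Matrix.one_apply]
        field_simp
        ring
      · simp [Matrix.mul_apply, Matrix.one_apply, h]
        field_simp
    rw [hm, Matrix.det_smul, Matrix.det_one_add_replicateCol_mul_replicateRow, Fintype.card_fin]
    congr 1
    simp [dotProduct, Finset.sum_const, Finset.card_univ, nsmul_eq_mul]
  have hdetG : ((1:ℂ)-e)^n * (1 + n * ((e:ℂ)/(1-e))) = ((((n:ℝ)+1)^(n-1) / (n:ℝ)^n : ℝ) : ℂ) := by
    obtain ⟨m, rfl⟩ : ∃ m, n = m + 1 := ⟨n - 1, by omega⟩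
    rw [heC]
    have h1 : ((m:ℂ)+1) ≠ 0 := by
      have : ((m:ℂ)+1) = ((m+1 : ℕ):ℂ) := by push_cast; ring
      rw [this]; exact Nat.cast_ne_zero.2 (by omega)
    have h2 : ((m:ℂ)+2) ≠ 0 := by
      have : ((m:ℂ)+2) = ((m+2 : ℕ):ℂ) := by push_cast; ring
      rw [this]; exact Nat.cast_ne_zero.2 (by omega)
    push_cast
    have e1 : (1:ℂ) - -1 / ((m:ℂ)+1) = ((m:ℂ)+2)/((m:ℂ)+1) := by field_simp; ring
    rw [e1, div_pow]
    have e2 : (1:ℂ) + ((m:ℂ) + 1) * (-1 / ((m:ℂ) + 1) / (((m:ℂ)+2)/((m:ℂ)+1))) = 1/((m:ℂ)+2) := by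
      field_simp
      ring
    rw [e2, pow_succ]
    field_simp
    ring
  have hnorm : (Complex.normSq M.det : ℂ) = ((((n:ℝ)+1)^(n-1) / (n:ℝ)^n : ℝ) : ℂ) := by
    calc (Complex.normSq M.det : ℂ) = star M.det * M.det := by
          rw [mul_comm, Complex.star_def]
          exact (Complex.mul_conj _).symm
      _ = _ := by rw [← Matrix.det_conjTranspose, ← Matrix.det_mul, hMG, hGdet, hdetG]
  have hns : Complex.normSq M.det = ((n:ℝ)+1)^(n-1) / (n:ℝ)^n := by exact_mod_cast hnorm
  rw [Complex.norm_def, hns]
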